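/- Let q be an odd prime, k an odd positive integer with q ≡ 1 (mod k), and E an integer not divisible by q. Then ψ_{q,k}(E) = (E/q)·φ_{q,k}(Ē), where Ē is the inverse of E modulo q. -/

import Mathlib

open Finset

theorem stmt_9 (q : ℕ) (hq : q.Prime) [Fact q.Prime] (hodd : q ≠ 2)
    (k : ℕ) (hk : Odd k) (hkpos : 0 < k) (hqk : q % k = 1 % k)
    (E : ℤ) (hE : ¬ ((q : ℤ) ∣ E)) :
    ∑ u ∈ Finset.Icc 1 (q - 1), legendreSym q ((u : ℤ) ^ k + E) =
      legendreSym q E *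
        ∑ u ∈ Finset.Icc 1 (q - 1),
          legendreSym q (u : ℤ) *
            legendreSym q ((u : ℤ) ^ k + (((E : ZMod q)⁻¹.val : ℕ) : ℤ)) := by
  have hq2 : 2 ≤ q := hq.two_le
  have hq0 : 0 < q := by omega
  set χ : MulChar (ZMod q) ℤ := quadraticChar (ZMod q) with hχ
  set E' : ZMod q := (E : ZMod q) with hE'
  have hE'0 : E' ≠ 0 := by
    simpa [hE', ZMod.intCast_zmod_eq_zero_iff_dvd] using hE
  -- reindexing Icc 1 (q-1) ↔ (ZMod q) \ {0}
  have hsum : ∀ g : ZMod q → ℤ,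
      ∑ u ∈ Finset.Icc 1 (q - 1), g ((u : ℕ) : ZMod q)
        = ∑ x ∈ (Finset.univ.erase (0 : ZMod q)), g x := by
    intro g
    refine Finset.sum_nbij' (fun u => ((u : ℕ) : ZMod q)) (fun x => x.val) ?_ ?_ ?_ ?_ ?_
    · intro u hu
      simp only [Finset.mem_Icc] at hu
      simp only [Finset.mem_erase, Finset.mem_univ, and_true]
      rw [Ne, ZMod.natCast_eq_zero_iff]
      intro hdvd
      have := Nat.le_of_dvd (by omega) hdvd
      omega
    · intro x hx
      simp only [Finset.mem_erase, Finset.mem_univ, and_true] at hx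
      have h1 : x.val < q := ZMod.val_lt x
      have h2 : x.val ≠ 0 := by
        intro h; exact hx (by rwa [← ZMod.val_eq_zero])
      simp only [Finset.mem_Icc]; omega
    · intro u hu
      simp only [Finset.mem_Icc] at hu
      exact ZMod.val_cast_of_lt (by omega)
    · intro x hx
      simp [ZMod.natCast_val, ZMod.cast_id]
    · intro u hu; rfl
  -- rewrite both sides as sums over ZMod q \ {0}
  have hLHS : ∑ u ∈ Finset.Icc 1 (q - 1), legendreSym q ((u : ℤ) ^ k + E)
      = ∑ x ∈ Finset.univ.erase (0 : ZMod q), χ (x ^ k + E') := by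
    rw [← hsum fun x => χ (x ^ k + E')]
    refine Finset.sum_congr rfl fun u _ => ?_
    show quadraticChar (ZMod q) _ = _
    congr 1
    push_cast [hE']
    ring
  have hinv : (((E'⁻¹.val : ℕ) : ℤ) : ZMod q) = E'⁻¹ := by
    push_cast
    simp [ZMod.natCast_val, ZMod.cast_id]
  have hRHS : ∑ u ∈ Finset.Icc 1 (q - 1),
        legendreSym q (u : ℤ) * legendreSym q ((u : ℤ) ^ k + (((E : ZMod q)⁻¹.val : ℕ) : ℤ))
      = ∑ x ∈ Finset.univ.erase (0 : ZMod q), χ x * χ (x ^ k + E'⁻¹) := by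
    rw [← hsum fun x => χ x * χ (x ^ k + E'⁻¹)]
    refine Finset.sum_congr rfl fun u _ => ?_
    show quadraticChar (ZMod q) _ * quadraticChar (ZMod q) _ = _
    congr 2
    · push_cast; ring
    · push_cast [hE']
      simp [ZMod.natCast_val, ZMod.cast_id]
  rw [hLHS, hRHS, Finset.mul_sum]
  have hleg : legendreSym q E = χ E' := rfl
  rw [hleg]
  obtain ⟨m, hm⟩ := hk
  refine Finset.sum_nbij' (fun x => x⁻¹) (fun x => x⁻¹) ?_ ?_ ?_ ?_ ?_
  · intro x hx
    simp only [Finset.mem_erase, Finset.mem_univ, and_true] at hx ⊢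
    exact inv_ne_zero hx
  · intro x hx
    simp only [Finset.mem_erase, Finset.mem_univ, and_true] at hx ⊢
    exact inv_ne_zero hx
  · intro x _; exact inv_inv x
  · intro x _; exact inv_inv x
  · intro x hx
    simp only [Finset.mem_erase, Finset.mem_univ, and_true] at hx
    rw [← map_mul, ← map_mul]
    have key : E' * (x⁻¹ * (x⁻¹ ^ k + E'⁻¹)) = (x⁻¹ ^ (m + 1)) ^ 2 * (x ^ k + E') := by
      rw [hm]
      field_simp
      have h : x * x⁻¹ = 1 := mul_inv_cancel₀ hx
      have h1 : x ^ (m * 2) * x⁻¹ ^ (m * 2) = 1 := by rw [← mul_pow, h, one_pow]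
      linear_combination (-(E' * x⁻¹ * x⁻¹ ^ (m * 2)) - (x * x⁻¹ + 1)) * h - (x * x⁻¹) ^ 2 * h1
    rw [key, map_mul, map_pow, map_pow, ← pow_mul, mul_comm (m + 1) 2, pow_mul,
      quadraticChar_sq_one (inv_ne_zero hx), one_pow, one_mul]
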